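/- If A_1, ..., A_p are row stochastic matrices and at least one A_i is scrambling (λ(A_i) < 1) while λ(A_j) ≤ 1 for all j, then δ(A_1 ··· A_p) ≤ λ(A_i) < 1. More generally, if at least s of the matrices satisfy λ(A_j) ≤ d < 1, then δ(A_1 ··· A_p) ≤ d^s. -/

import Mathlib

open Finset Matrix

def RowStochastic {n : Type*} [Fintype n] (A : Matrix n n ℝ) : Prop :=
  (∀ i j, 0 ≤ A i j) ∧ ∀ i, ∑ j, A i j = 1

noncomputable def deltaErg {n : Type*} [Fintype n] [Nonempty n] (A : Matrix n n ℝ) : ℝ :=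
  univ.sup' univ_nonempty fun j : n =>
    univ.sup' univ_nonempty fun p : n × n => |A p.1 j - A p.2 j|

noncomputable def lamErg {n : Type*} [Fintype n] [Nonempty n] (A : Matrix n n ℝ) : ℝ :=
  1 - univ.inf' univ_nonempty fun p : n × n => ∑ j, min (A p.1 j) (A p.2 j)

section Aux
variable {n : Type*} [Fintype n] [DecidableEq n] [Nonempty n]

lemma abs_sub_le_deltaErg (B : Matrix n n ℝ) (k1 k2 j : n) :
    |B k1 j - B k2 j| ≤ deltaErg B := by
  calc |B k1 j - B k2 j|
      ≤ univ.sup' univ_nonempty fun p : n × n => |B p.1 j - B p.2 j| := by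
        exact Finset.le_sup' (fun p : n × n => |B p.1 j - B p.2 j|)
          (mem_univ (k1, k2))
    _ ≤ deltaErg B :=
        Finset.le_sup' (fun j : n => univ.sup' univ_nonempty
          fun p : n × n => |B p.1 j - B p.2 j|) (mem_univ j)

lemma deltaErg_nonneg (B : Matrix n n ℝ) : 0 ≤ deltaErg B := by
  have := abs_sub_le_deltaErg B (Classical.arbitrary n) (Classical.arbitrary n)
    (Classical.arbitrary n)
  simpa using this

lemma lamErg_nonneg (A : Matrix n n ℝ) (hA : RowStochastic A) : 0 ≤ lamErg A := by
  have h : (univ.inf' univ_nonempty fun p : n × n => ∑ j, min (A p.1 j) (A p.2 j)) ≤ 1 := by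
    refine le_trans (Finset.inf'_le _ (mem_univ (Classical.arbitrary n, Classical.arbitrary n))) ?_
    simp only [min_self]
    exact le_of_eq (hA.2 _)
  simpa [lamErg] using h

lemma lamErg_le_one (A : Matrix n n ℝ) (hA : RowStochastic A) : lamErg A ≤ 1 := by
  have h : (0:ℝ) ≤ univ.inf' univ_nonempty fun p : n × n => ∑ j, min (A p.1 j) (A p.2 j) := by
    refine Finset.le_inf' _ _ fun q _ => Finset.sum_nonneg fun j _ =>
      le_min (hA.1 _ _) (hA.1 _ _)
  simp only [lamErg]
  linarith

lemma one_sub_lamErg_le (A : Matrix n n ℝ) (i1 i2 : n) :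
    1 - lamErg A ≤ ∑ j, min (A i1 j) (A i2 j) := by
  have := Finset.inf'_le (b := (i1, i2))
    (f := fun p : n × n => ∑ j, min (A p.1 j) (A p.2 j)) (mem_univ _)
  simp only [lamErg]
  linarith

lemma deltaErg_le_one (A : Matrix n n ℝ) (hA : RowStochastic A) : deltaErg A ≤ 1 := by
  refine Finset.sup'_le _ _ fun j _ => Finset.sup'_le _ _ fun q _ => ?_
  have hle : ∀ i k, A i k ≤ 1 := by
    intro i k
    rw [← hA.2 i]
    exact Finset.single_le_sum (fun m _ => hA.1 i m) (mem_univ k)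
  rw [abs_sub_le_iff]
  constructor <;> linarith [hA.1 q.1 j, hA.1 q.2 j, hle q.1 j, hle q.2 j]

lemma rowStochastic_one : RowStochastic (1 : Matrix n n ℝ) := by
  classical
  constructor
  · intro i j
    by_cases h : i = j <;> simp [Matrix.one_apply, h]
  · intro i
    simp [Matrix.one_apply]

/-- Key contraction lemma. -/
lemma deltaErg_mul_le (A B : Matrix n n ℝ) (hA : RowStochastic A) :
    deltaErg (A * B) ≤ lamErg A * deltaErg B := by
  classical
  refine Finset.sup'_le _ _ fun j _ => Finset.sup'_le _ _ fun q _ => ?_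
  obtain ⟨i1, i2⟩ := q
  simp only
  set hi := univ.sup' univ_nonempty fun k : n => B k j with hhi
  set lo := univ.inf' univ_nonempty fun k : n => B k j with hlo
  have hlohi : hi - lo ≤ deltaErg B := by
    obtain ⟨k1, _, hk1⟩ := Finset.exists_mem_eq_sup' (univ_nonempty) (fun k : n => B k j)
    obtain ⟨k2, _, hk2⟩ := Finset.exists_mem_eq_inf' (univ_nonempty) (fun k : n => B k j)
    have := abs_sub_le_deltaErg B k1 k2 j
    rw [hhi, hlo, hk1, hk2]
    exact le_trans (le_abs_self _) this
  have hlole : lo ≤ hi := by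
    have h1 : lo ≤ B (Classical.arbitrary n) j :=
      Finset.inf'_le (fun k : n => B k j) (mem_univ _)
    have h2 : B (Classical.arbitrary n) j ≤ hi :=
      Finset.le_sup' (fun k : n => B k j) (mem_univ _)
    linarith
  -- one-sided bound
  have key : ∀ a b : n,
      (A * B) a j - (A * B) b j ≤ (1 - ∑ k, min (A a k) (A b k)) * (hi - lo) := by
    intro a b
    have hsum1 : (A * B) a j = ∑ k, A a k * B k j := Matrix.mul_apply
    have hsum2 : (A * B) b j = ∑ k, A b k * B k j := Matrix.mul_apply
    set c : n → ℝ := fun k => min (A a k) (A b k) with hc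
    have h1 : ∑ k, A a k * B k j ≤ ∑ k, c k * B k j + (1 - ∑ k, c k) * hi := by
      have : ∀ k ∈ univ, A a k * B k j ≤ c k * B k j + (A a k - c k) * hi := by
        intro k _
        have h0 : 0 ≤ A a k - c k := by simp [hc]
        have hBhi : B k j ≤ hi := Finset.le_sup' (fun k : n => B k j) (mem_univ k)
        nlinarith
      calc ∑ k, A a k * B k j ≤ ∑ k, (c k * B k j + (A a k - c k) * hi) :=
            Finset.sum_le_sum this
        _ = ∑ k, c k * B k j + (1 - ∑ k, c k) * hi := by
            rw [Finset.sum_add_distrib, ← Finset.sum_mul, Finset.sum_sub_distrib, hA.2 a]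
    have h2 : ∑ k, c k * B k j + (1 - ∑ k, c k) * lo ≤ ∑ k, A b k * B k j := by
      have : ∀ k ∈ univ, c k * B k j + (A b k - c k) * lo ≤ A b k * B k j := by
        intro k _
        have h0 : 0 ≤ A b k - c k := by simp [hc]
        have hBlo : lo ≤ B k j := Finset.inf'_le (fun k : n => B k j) (mem_univ k)
        nlinarith
      calc ∑ k, c k * B k j + (1 - ∑ k, c k) * lo
          = ∑ k, (c k * B k j + (A b k - c k) * lo) := by
            rw [Finset.sum_add_distrib, ← Finset.sum_mul, Finset.sum_sub_distrib, hA.2 b]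
        _ ≤ ∑ k, A b k * B k j := Finset.sum_le_sum this
    rw [hsum1, hsum2]
    nlinarith
  have hc1 : 1 - ∑ k, min (A i1 k) (A i2 k) ≤ lamErg A := by
    have := one_sub_lamErg_le A i1 i2
    linarith
  have hcnn : 0 ≤ 1 - ∑ k, min (A i1 k) (A i2 k) := by
    have : ∑ k, min (A i1 k) (A i2 k) ≤ ∑ k, A i1 k :=
      Finset.sum_le_sum fun k _ => min_le_left _ _
    rw [hA.2 i1] at this
    linarith
  have hboth : |(A * B) i1 j - (A * B) i2 j| ≤ (1 - ∑ k, min (A i1 k) (A i2 k)) * (hi - lo) := by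
    rw [abs_sub_le_iff]
    refine ⟨key i1 i2, ?_⟩
    have := key i2 i1
    have hmc : ∀ k, min (A i2 k) (A i1 k) = min (A i1 k) (A i2 k) := fun k => min_comm _ _
    simpa [hmc] using this
  calc |(A * B) i1 j - (A * B) i2 j|
      ≤ (1 - ∑ k, min (A i1 k) (A i2 k)) * (hi - lo) := hboth
    _ ≤ lamErg A * deltaErg B := by
        apply mul_le_mul hc1 hlohi (by linarith) (lamErg_nonneg A hA)

lemma deltaErg_list_prod_le (L : List (Matrix n n ℝ)) (hL : ∀ M ∈ L, RowStochastic M) :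
    deltaErg L.prod ≤ (L.map lamErg).prod := by
  induction L with
  | nil => simpa using deltaErg_le_one 1 rowStochastic_one
  | cons M L ih =>
    have hM : RowStochastic M := hL M List.mem_cons_self
    have hrest := ih fun N hN => hL N (List.mem_cons_of_mem _ hN)
    simp only [List.prod_cons, List.map_cons]
    calc deltaErg (M * L.prod) ≤ lamErg M * deltaErg L.prod := deltaErg_mul_le M L.prod hM
      _ ≤ lamErg M * (L.map lamErg).prod := by
          apply mul_le_mul_of_nonneg_left hrest (lamErg_nonneg M hM)

end Aux

theorem stmt8 {n : Type*} [Fintype n] [DecidableEq n] [Nonempty n] (p : ℕ)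
    (A : Fin p → Matrix n n ℝ) (hA : ∀ i, RowStochastic (A i)) :
    (∀ i : Fin p, lamErg (A i) < 1 →
        deltaErg (List.ofFn A).prod ≤ lamErg (A i) ∧ lamErg (A i) < 1) ∧
      ∀ (d : ℝ) (s : ℕ) (S : Finset (Fin p)), 0 ≤ d → d < 1 →
        (∀ j ∈ S, lamErg (A j) ≤ d) → s ≤ S.card →
        deltaErg (List.ofFn A).prod ≤ d ^ s := by
  have hprod : deltaErg (List.ofFn A).prod ≤ ∏ i, lamErg (A i) := by
    have h := deltaErg_list_prod_le (List.ofFn A) (by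
      intro M hM
      obtain ⟨i, rfl⟩ := List.mem_ofFn.mp hM
      exact hA i)
    rwa [List.map_ofFn, List.prod_ofFn] at h
  have hmain : ∀ (d : ℝ) (s : ℕ) (S : Finset (Fin p)), 0 ≤ d → d < 1 →
      (∀ j ∈ S, lamErg (A j) ≤ d) → s ≤ S.card →
      deltaErg (List.ofFn A).prod ≤ d ^ s := by
    intro d s S hd0 hd1 hS hcard
    have hSnn : ∀ j ∈ S, 0 ≤ lamErg (A j) := fun j _ => lamErg_nonneg _ (hA j)
    have h1 : ∏ i, lamErg (A i) ≤ ∏ j ∈ S, lamErg (A j) := by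
      rw [← Finset.prod_mul_prod_compl S (fun i => lamErg (A i))]
      have hSc1 : ∏ i ∈ Sᶜ, lamErg (A i) ≤ 1 :=
        Finset.prod_le_one (fun i _ => lamErg_nonneg _ (hA i))
          (fun i _ => lamErg_le_one _ (hA i))
      have hSnn' : 0 ≤ ∏ j ∈ S, lamErg (A j) := Finset.prod_nonneg hSnn
      nlinarith
    have h2 : ∏ j ∈ S, lamErg (A j) ≤ ∏ _j ∈ S, d :=
      Finset.prod_le_prod hSnn hS
    have h3 : (∏ _j ∈ S, d) = d ^ S.card := by simp
    have h4 : d ^ S.card ≤ d ^ s := pow_le_pow_of_le_one hd0 hd1.le hcard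
    calc deltaErg (List.ofFn A).prod ≤ ∏ i, lamErg (A i) := hprod
      _ ≤ d ^ s := by rw [h3] at h2; linarith
  refine ⟨?_, hmain⟩
  intro i hi
  refine ⟨?_, hi⟩
  have := hmain (lamErg (A i)) 1 {i} (lamErg_nonneg _ (hA i)) hi
    (by intro j hj; simp at hj; subst hj; exact le_refl _) (by simp)
  simpa using this
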